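/- Let n = 2^m + r with integers m ≥ 0 and 0 ≤ r < 2^m. Then the minimum, over all integers t ≥ 1 and all P_0, …, P_{t−1} ∈ 𝓜_n^♮ with rank(P_{t−1}⋯P_0) = 1, of the number of node updates Σ_{k=0}^{t−1} ‖I_n − P_k‖_1 equals m·n + 2r. -/

import Mathlib

open Matrix

/-- The symmetric gossip matrix `M_{ij} = I - (e_i - e_j)(e_i - e_j)^T / 2`. -/
noncomputable def gossipM (n : ℕ) (i j : Fin n) : Matrix (Fin n) (Fin n) ℝ :=
  1 - (1 / 2 : ℝ) • vecMulVec (Pi.single i 1 - Pi.single j 1) (Pi.single i 1 - Pi.single j 1)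

/-- The asymmetric gossip matrix `I - e_i (e_i - e_j)^T / 2`. -/
noncomputable def gossipA (n : ℕ) (i j : Fin n) : Matrix (Fin n) (Fin n) ℝ :=
  1 - (1 / 2 : ℝ) • vecMulVec (Pi.single i 1) (Pi.single i 1 - Pi.single j 1)

/-- Membership in the set `𝓜_n^♮` of (symmetric or asymmetric) gossip matrices. -/
def memAsym (n : ℕ) (P : Matrix (Fin n) (Fin n) ℝ) : Prop :=
  ∃ i j, P = gossipM n i j ∨ P = gossipA n i j

noncomputable def dvec (n : ℕ) (p q : Fin n) : Fin n → ℝ :=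
  Pi.single p 1 - Pi.single q 1

section basic
variable {n : ℕ}

lemma gossipM_eq (p q : Fin n) :
    gossipM n p q = 1 - (1/2 : ℝ) • vecMulVec (dvec n p q) (dvec n p q) := rfl

lemma gossipA_eq (p q : Fin n) :
    gossipA n p q = 1 - (1/2 : ℝ) • vecMulVec (Pi.single p 1) (dvec n p q) := rfl

lemma dvec_apply (p q j : Fin n) :
    dvec n p q j = (if j = p then (1:ℝ) else 0) - (if j = q then 1 else 0) := by
  simp [dvec, Pi.single_apply]

lemma sum_dvec_mul (p q : Fin n) (f : Fin n → ℝ) :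
    ∑ k, dvec n p q k * f k = f p - f q := by
  simp only [dvec_apply, sub_mul, ite_mul, one_mul, zero_mul]
  rw [Finset.sum_sub_distrib]
  simp [Finset.sum_ite_eq']

lemma sum_abs_dvec (p q : Fin n) (hpq : p ≠ q) :
    ∑ j, |dvec n p q j| = 2 := by
  have h : ∀ j, |dvec n p q j|
      = (if j = p then (1:ℝ) else 0) + (if j = q then 1 else 0) := by
    intro j
    rw [dvec_apply]
    rcases eq_or_ne j p with h | h <;> rcases eq_or_ne j q with h' | h' <;>
      simp_all
  simp [h, Finset.sum_add_distrib, Finset.sum_ite_eq']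
  norm_num

lemma gossipM_mul (p q : Fin n) (hpq : p ≠ q) (X : Matrix (Fin n) (Fin n) ℝ) (i j : Fin n) :
    (gossipM n p q * X) i j = if i = p ∨ i = q then (X p j + X q j) / 2 else X i j := by
  have h0 : gossipM n p q * X = X - (1/2 : ℝ) • (vecMulVec (dvec n p q) (dvec n p q) * X) := by
    rw [gossipM_eq, Matrix.sub_mul, Matrix.one_mul, Matrix.smul_mul]
  rw [h0]
  have hmul : (vecMulVec (dvec n p q) (dvec n p q) * X) i j
      = dvec n p q i * (X p j - X q j) := by
    rw [Matrix.mul_apply]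
    simp only [vecMulVec_apply, mul_assoc]
    rw [← Finset.mul_sum, sum_dvec_mul]
  simp only [Matrix.sub_apply, Matrix.smul_apply, hmul, smul_eq_mul]
  rcases eq_or_ne i p with h | h
  · subst h
    simp only [dvec_apply, if_pos rfl, if_neg hpq]
    simp
    ring
  · rcases eq_or_ne i q with h' | h'
    · subst h'
      simp only [dvec_apply, if_pos rfl, if_neg h]
      simp [h]
      ring
    · have hor : ¬ (i = p ∨ i = q) := by tauto
      simp only [dvec_apply, if_neg h, if_neg h', if_neg hor]
      ring

lemma gossipA_mul (p q : Fin n) (hpq : p ≠ q) (X : Matrix (Fin n) (Fin n) ℝ) (i j : Fin n) :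
    (gossipA n p q * X) i j = if i = p then (X p j + X q j) / 2 else X i j := by
  have h0 : gossipA n p q * X
      = X - (1/2 : ℝ) • (vecMulVec (Pi.single p 1) (dvec n p q) * X) := by
    rw [gossipA_eq, Matrix.sub_mul, Matrix.one_mul, Matrix.smul_mul]
  rw [h0]
  have hmul : (vecMulVec (Pi.single p (1:ℝ)) (dvec n p q) * X) i j
      = (Pi.single p 1 : Fin n → ℝ) i * (X p j - X q j) := by
    rw [Matrix.mul_apply]
    simp only [vecMulVec_apply, mul_assoc]
    rw [← Finset.mul_sum, sum_dvec_mul]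
  simp only [Matrix.sub_apply, Matrix.smul_apply, hmul, smul_eq_mul]
  rcases eq_or_ne i p with h | h
  · subst h
    simp only [Pi.single_apply, if_pos rfl]
    simp
    ring
  · simp only [Pi.single_apply, if_neg h]
    ring

lemma gossipM_self (p : Fin n) : gossipM n p p = 1 := by
  rw [gossipM_eq]
  have h : dvec n p p = 0 := by simp [dvec]
  rw [h]
  ext i j
  simp [vecMulVec_apply]

lemma cost_gossipM (p q : Fin n) (hpq : p ≠ q) :
    ∑ i, ∑ j, |(1 - gossipM n p q) i j| = 2 := by
  have h1 : (1 : Matrix (Fin n) (Fin n) ℝ) - gossipM n p q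
      = (1/2 : ℝ) • vecMulVec (dvec n p q) (dvec n p q) := by
    rw [gossipM_eq, sub_sub_cancel]
  rw [h1]
  have h : ∀ i j : Fin n, |((1/2 : ℝ) • vecMulVec (dvec n p q) (dvec n p q)) i j|
      = (1/2) * (|dvec n p q i| * |dvec n p q j|) := by
    intro i j
    simp [vecMulVec_apply, abs_mul]
    try ring
  simp only [h, ← Finset.mul_sum, sum_abs_dvec p q hpq, ← Finset.sum_mul]
  try norm_num

lemma cost_gossipA (p q : Fin n) (hpq : p ≠ q) :
    ∑ i, ∑ j, |(1 - gossipA n p q) i j| = 1 := by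
  have h1 : (1 : Matrix (Fin n) (Fin n) ℝ) - gossipA n p q
      = (1/2 : ℝ) • vecMulVec (Pi.single p 1) (dvec n p q) := by
    rw [gossipA_eq, sub_sub_cancel]
  rw [h1]
  have habs : ∑ i, |(Pi.single p 1 : Fin n → ℝ) i| = 1 := by
    have h2 : ∀ x : Fin n, |(Pi.single p 1 : Fin n → ℝ) x| = if x = p then (1:ℝ) else 0 := by
      intro x
      rw [Pi.single_apply]
      split_ifs <;> simp
    simp [h2, Finset.sum_ite_eq']
  have h : ∀ i j : Fin n, |((1/2 : ℝ) • vecMulVec (Pi.single p 1) (dvec n p q)) i j|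
      = (1/2) * (|(Pi.single p 1 : Fin n → ℝ) i| * |dvec n p q j|) := by
    intro i j
    simp [vecMulVec_apply, abs_mul]
    try ring
  simp only [h, ← Finset.mul_sum, sum_abs_dvec p q hpq, ← Finset.sum_mul, habs]
  norm_num


-- new part
lemma sum_dvec (p q : Fin n) : ∑ j, dvec n p q j = 0 := by
  simp [dvec_apply, Finset.sum_sub_distrib, Finset.sum_ite_eq']

lemma single_apply' (p j : Fin n) :
    (Pi.single p 1 : Fin n → ℝ) j = if j = p then 1 else 0 := by
  simp [Pi.single_apply]

lemma gossipM_self' (p : Fin n) : gossipM n p p = 1 := by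
  rw [gossipM_eq]
  have h : dvec n p p = 0 := by simp [dvec]
  rw [h]
  ext i j
  simp [vecMulVec_apply]

lemma gossipA_self' (p : Fin n) : gossipA n p p = 1 := by
  rw [gossipA_eq]
  have h : dvec n p p = 0 := by simp [dvec]
  rw [h]
  ext i j
  simp [vecMulVec_apply]

lemma gossipM_apply (p q i j : Fin n) :
    gossipM n p q i j
      = (if i = j then (1:ℝ) else 0) - 1/2 * (dvec n p q i * dvec n p q j) := by
  rw [gossipM_eq]
  simp [Matrix.sub_apply, Matrix.one_apply, vecMulVec_apply]

lemma gossipA_apply (p q i j : Fin n) :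
    gossipA n p q i j
      = (if i = j then (1:ℝ) else 0)
        - 1/2 * ((if i = p then (1:ℝ) else 0) * dvec n p q j) := by
  rw [gossipA_eq]
  simp [Matrix.sub_apply, Matrix.one_apply, vecMulVec_apply, single_apply']

lemma memAsym_nonneg {P : Matrix (Fin n) (Fin n) ℝ} (hP : memAsym n P) (i j : Fin n) :
    0 ≤ P i j := by
  obtain ⟨p, q, h | h⟩ := hP <;> subst h
  · rw [gossipM_apply, dvec_apply, dvec_apply]
    split_ifs <;> simp_all <;> norm_num
  · rw [gossipA_apply, dvec_apply]
    split_ifs <;> simp_all <;> norm_num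

lemma memAsym_rowsum {P : Matrix (Fin n) (Fin n) ℝ} (hP : memAsym n P) (i : Fin n) :
    ∑ j, P i j = 1 := by
  obtain ⟨p, q, h | h⟩ := hP <;> subst h
  · simp [gossipM_apply, Finset.sum_sub_distrib, ← Finset.mul_sum, sum_dvec,
      Finset.sum_ite_eq']
  · simp [gossipA_apply, Finset.sum_sub_distrib, ← Finset.mul_sum, sum_dvec,
      Finset.sum_ite_eq']

lemma memAsym_key {P : Matrix (Fin n) (Fin n) ℝ} (hP : memAsym n P) (i : Fin n) :
    ∃ ν : ℕ, (ν:ℝ) = ∑ j, |(1 - P) i j| ∧ ((1:ℝ)/2)^ν ≤ P i i := by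
  obtain ⟨p, q, h | h⟩ := hP <;> subst h
  · rcases eq_or_ne p q with hpq | hpq
    · subst hpq
      rw [gossipM_self']
      exact ⟨0, by simp, by simp [Matrix.one_apply]⟩
    · have hrow : ∀ i' j : Fin n, (1 - gossipM n p q) i' j
          = 1/2 * (dvec n p q i' * dvec n p q j) := by
        intro i' j
        rw [Matrix.sub_apply, gossipM_apply, Matrix.one_apply]
        ring
      have hsum : ∑ j, |(1 - gossipM n p q) i j| = |dvec n p q i| := by
        have : ∀ j, |(1 - gossipM n p q) i j| = 1/2 * |dvec n p q i| * |dvec n p q j| := by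
          intro j
          rw [hrow, abs_mul, abs_mul]
          simp [abs_of_nonneg]
          ring
        rw [Finset.sum_congr rfl (fun j _ => this j), ← Finset.mul_sum,
          sum_abs_dvec p q hpq]
        ring
      by_cases hi : i = p ∨ i = q
      · refine ⟨1, ?_, ?_⟩
        · rw [hsum, dvec_apply]
          rcases hi with h | h <;> subst h
          · rw [if_pos rfl, if_neg hpq]; norm_num
          · rw [if_neg (Ne.symm hpq), if_pos rfl]; norm_num
        · rw [gossipM_apply, dvec_apply]
          rcases hi with h | h <;> subst h
          · simp [hpq]
            try norm_num
          · simp [Ne.symm hpq]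
            try norm_num
      · push_neg at hi
        refine ⟨0, ?_, ?_⟩
        · rw [hsum, dvec_apply, if_neg hi.1, if_neg hi.2]
          simp
        · rw [gossipM_apply, dvec_apply, if_neg hi.1, if_neg hi.2]
          simp
  · rcases eq_or_ne p q with hpq | hpq
    · subst hpq
      rw [gossipA_self']
      exact ⟨0, by simp, by simp [Matrix.one_apply]⟩
    · have hrow : ∀ i' j : Fin n, (1 - gossipA n p q) i' j
          = 1/2 * ((if i' = p then (1:ℝ) else 0) * dvec n p q j) := by
        intro i' j
        rw [Matrix.sub_apply, gossipA_apply, Matrix.one_apply]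
        ring
      have hsum : ∑ j, |(1 - gossipA n p q) i j| = |if i = p then (1:ℝ) else 0| := by
        have : ∀ j, |(1 - gossipA n p q) i j|
            = 1/2 * |if i = p then (1:ℝ) else 0| * |dvec n p q j| := by
          intro j
          rw [hrow, abs_mul, abs_mul]
          simp [abs_of_nonneg]
          ring
        rw [Finset.sum_congr rfl (fun j _ => this j), ← Finset.mul_sum,
          sum_abs_dvec p q hpq]
        ring
      by_cases hi : i = p
      · subst hi
        refine ⟨1, ?_, ?_⟩
        · rw [hsum]; simp
        · rw [gossipA_apply, dvec_apply]
          simp only [if_pos rfl, if_neg hpq]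
          norm_num
      · refine ⟨0, ?_, ?_⟩
        · rw [hsum, if_neg hi]; simp
        · rw [gossipA_apply, if_neg hi, if_pos rfl]
          simp

lemma prod_spec (L : List (Matrix (Fin n) (Fin n) ℝ)) (hL : ∀ P ∈ L, memAsym n P) :
    (∀ i j, (0:ℝ) ≤ L.prod i j) ∧ (∀ i, ∑ j, L.prod i j = 1) ∧
    (∀ i, ∃ u : ℕ, (u:ℝ) = (L.map (fun P => ∑ j, |(1 - P) i j|)).sum
        ∧ ((1:ℝ)/2)^u ≤ L.prod i i) := by
  induction L with
  | nil =>
    refine ⟨?_, ?_, ?_⟩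
    · intro i j
      simp [Matrix.one_apply]
      split_ifs <;> norm_num
    · intro i
      simp [Matrix.one_apply, Finset.sum_ite_eq']
    · intro i
      exact ⟨0, by simp, by simp [Matrix.one_apply]⟩
  | cons P L ih =>
    have hP : memAsym n P := hL P List.mem_cons_self
    have hL' : ∀ Q ∈ L, memAsym n Q := fun Q hQ => hL Q (List.mem_cons_of_mem _ hQ)
    obtain ⟨hnn, hrs, hdiag⟩ := ih hL'
    have hprod : (P :: L).prod = P * L.prod := List.prod_cons
    refine ⟨?_, ?_, ?_⟩
    · intro i j
      rw [hprod, Matrix.mul_apply]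
      exact Finset.sum_nonneg fun k _ => mul_nonneg (memAsym_nonneg hP i k) (hnn k j)
    · intro i
      rw [hprod]
      simp only [Matrix.mul_apply]
      rw [Finset.sum_comm]
      calc ∑ k, ∑ j, P i k * L.prod k j
          = ∑ k, P i k * ∑ j, L.prod k j := by
            refine Finset.sum_congr rfl fun k _ => ?_
            rw [Finset.mul_sum]
        _ = ∑ k, P i k := by simp [hrs]
        _ = 1 := memAsym_rowsum hP i
    · intro i
      obtain ⟨u, hu, hub⟩ := hdiag i
      obtain ⟨ν, hν, hνb⟩ := memAsym_key hP i
      refine ⟨ν + u, ?_, ?_⟩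
      · simp only [List.map_cons, List.sum_cons]
        push_cast
        rw [hν, hu]
      · rw [hprod, Matrix.mul_apply]
        have h1 : P i i * L.prod i i ≤ ∑ k, P i k * L.prod k i :=
          Finset.single_le_sum
            (fun k _ => mul_nonneg (memAsym_nonneg hP i k) (hnn k i))
            (Finset.mem_univ i)
        have h2 : ((1:ℝ)/2)^(ν+u) ≤ P i i * L.prod i i := by
          rw [pow_add]
          exact mul_le_mul hνb hub (by positivity)
            (le_trans (by positivity) hνb)
        linarith

lemma rows_eq_of_rank_one {Q : Matrix (Fin n) (Fin n) ℝ} (h : Q.rank = 1)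
    (hs : ∀ i, ∑ j, Q i j = 1) (i i' : Fin n) : Q i = Q i' := by
  rw [Matrix.rank_eq_finrank_span_row] at h
  obtain ⟨v₀, hv₀, hall⟩ := finrank_eq_one_iff'.mp h
  have hmem : ∀ k : Fin n, Q k ∈ Submodule.span ℝ (Set.range Q) :=
    fun k => Submodule.subset_span (Set.mem_range_self k)
  obtain ⟨c, hc⟩ := hall ⟨Q i, hmem i⟩
  obtain ⟨c', hc'⟩ := hall ⟨Q i', hmem i'⟩
  have hc2 : c • (v₀ : Fin n → ℝ) = Q i := congrArg Subtype.val hc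
  have hc2' : c' • (v₀ : Fin n → ℝ) = Q i' := congrArg Subtype.val hc'
  have hs1 : c * ∑ j, (v₀ : Fin n → ℝ) j = 1 := by
    rw [← hs i, ← hc2]
    simp [Finset.mul_sum]
  have hs2 : c' * ∑ j, (v₀ : Fin n → ℝ) j = 1 := by
    rw [← hs i', ← hc2']
    simp [Finset.mul_sum]
  have hsum_ne : (∑ j, (v₀ : Fin n → ℝ) j) ≠ 0 := by
    intro h0
    rw [h0, mul_zero] at hs1
    norm_num at hs1
  have hcc : c * (∑ j, (v₀ : Fin n → ℝ) j) = c' * (∑ j, (v₀ : Fin n → ℝ) j) := by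
    rw [hs1, hs2]
  have : c = c' := mul_right_cancel₀ hsum_ne hcc
  rw [← hc2, ← hc2', this]

lemma rank_one_of_rows_eq (hn : 0 < n) {Q : Matrix (Fin n) (Fin n) ℝ} (v : Fin n → ℝ)
    (hQ : ∀ i, Q i = v) (hv : ∑ j, v j = 1) : Q.rank = 1 := by
  rw [Matrix.rank_eq_finrank_span_row]
  have hQ' : Q = fun _ => v := funext hQ
  have : Set.range Q = {v} := by
    rw [hQ']
    haveI : Nonempty (Fin n) := ⟨⟨0, hn⟩⟩
    exact Set.range_const
  rw [show Set.range Q.row = {v} from this]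
  have hv0 : v ≠ 0 := by
    intro h0
    rw [h0] at hv
    simp at hv
  exact finrank_span_singleton hv0

lemma key_ineq (m u : ℕ) : ((m:ℝ) + 2) - 2^(m+1) * ((1:ℝ)/2)^u ≤ u := by
  rcases le_or_gt u (m+1) with h | h
  · have h2u : (0:ℝ) < 2^u := by positivity
    have hpow : (2:ℝ)^(m+1) * ((1:ℝ)/2)^u = 2^(m+1-u) := by
      have hone : ((1:ℝ)/2)^u = ((2:ℝ)^u)⁻¹ := by
        rw [one_div, inv_pow]
      have hmul : (2:ℝ)^(m+1-u) * 2^u = 2^(m+1) := by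
        rw [← pow_add]
        congr 1
        omega
      rw [hone]
      field_simp
      linarith [hmul]
    rw [hpow]
    have hk : ((m+1-u : ℕ):ℝ) + 1 ≤ 2^(m+1-u) := by
      have h3 : (m+1-u) + 1 ≤ 2^(m+1-u) := Nat.succ_le_of_lt Nat.lt_two_pow_self
      exact_mod_cast h3
    have hcast : ((m+1-u:ℕ):ℝ) = (m:ℝ) + 1 - u := by
      rw [Nat.cast_sub h]
      push_cast
      ring
    rw [hcast] at hk
    linarith
  · have h1 : (0:ℝ) < 2^(m+1) * ((1:ℝ)/2)^u := by positivity
    have h2 : (m:ℝ) + 2 ≤ u := by exact_mod_cast h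
    linarith
lemma lower_bound (m r n : ℕ) (hr : r < 2 ^ m) (hn : n = 2 ^ m + r)
    (t : ℕ) (ht : 1 ≤ t) (P : Fin t → Matrix (Fin n) (Fin n) ℝ)
    (hm : ∀ k, memAsym n (P k)) (hrank : ((List.ofFn P).reverse.prod).rank = 1) :
    ((m * n + 2 * r : ℕ) : ℝ) ≤ ∑ k, ∑ i, ∑ j, |(1 - P k) i j| := by
  have hn0 : 0 < n := by
    rw [hn]; positivity
  set L : List (Matrix (Fin n) (Fin n) ℝ) := (List.ofFn P).reverse with hLdef
  have hL : ∀ Q ∈ L, memAsym n Q := by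
    intro Q hQ
    rw [hLdef, List.mem_reverse, List.mem_ofFn] at hQ
    obtain ⟨k, hk⟩ := hQ
    exact hk ▸ hm k
  obtain ⟨hnn, hrs, hdiag⟩ := prod_spec L hL
  choose u hu hub using hdiag
  -- trace = 1
  have i0 : Fin n := ⟨0, hn0⟩
  have hrows : ∀ i, L.prod i = L.prod i0 :=
    fun i => rows_eq_of_rank_one hrank hrs i i0
  have htrace : ∑ i, L.prod i i = 1 := by
    calc ∑ i, L.prod i i = ∑ i, L.prod i0 i := by
          refine Finset.sum_congr rfl fun i _ => ?_
          rw [hrows i]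
      _ = 1 := hrs i0
  have hsum_le : ∑ i, ((1:ℝ)/2)^(u i) ≤ 1 :=
    le_trans (Finset.sum_le_sum fun i _ => hub i) (le_of_eq htrace)
  -- cost identity
  have hcost : ∑ k, ∑ i, ∑ j, |(1 - P k) i j| = ∑ i, (u i : ℝ) := by
    have hmapsum : ∀ i, (L.map (fun Q => ∑ j, |(1 - Q) i j|)).sum
        = ∑ k, ∑ j, |(1 - P k) i j| := by
      intro i
      rw [hLdef, List.map_reverse, List.sum_reverse, List.map_ofFn, List.sum_ofFn]
      rfl
    rw [Finset.sum_comm]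
    refine Finset.sum_congr rfl fun i _ => ?_
    rw [hu i, hmapsum i]
  rw [hcost]
  -- key inequality
  have hkey : ∀ i : Fin n, ((m:ℝ) + 2) - 2^(m+1) * ((1:ℝ)/2)^(u i) ≤ (u i : ℝ) :=
    fun i => key_ineq m (u i)
  have hsum_key : ∑ i : Fin n, (((m:ℝ) + 2) - 2^(m+1) * ((1:ℝ)/2)^(u i)) ≤ ∑ i, (u i : ℝ) :=
    Finset.sum_le_sum fun i _ => hkey i
  have hlhs : ∑ i : Fin n, (((m:ℝ) + 2) - 2^(m+1) * ((1:ℝ)/2)^(u i))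
      = n * ((m:ℝ)+2) - 2^(m+1) * ∑ i, ((1:ℝ)/2)^(u i) := by
    rw [Finset.sum_sub_distrib, Finset.sum_const, ← Finset.mul_sum]
    simp [Finset.card_univ]
    ring
  have h2pow : ((2:ℝ))^(m+1) = 2 * 2^m := by ring
  have hncast : (n:ℝ) = 2^m + r := by
    rw [hn]; push_cast; ring
  have htarget : ((m * n + 2 * r : ℕ) : ℝ) = (m:ℝ) * n + 2 * r := by push_cast; ring
  rw [htarget]
  have hfin : 2^(m+1) * ∑ i, ((1:ℝ)/2)^(u i) ≤ 2^(m+1) := by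
    have hp : (0:ℝ) ≤ 2^(m+1) := by positivity
    have := mul_le_mul_of_nonneg_left hsum_le hp
    simpa using this
  linarith [hsum_key, hlhs, hfin]


end basic

def fi (n : ℕ) (hn : 0 < n) (k : ℕ) : Fin n := ⟨k % n, Nat.mod_lt _ hn⟩

lemma fi_val {n : ℕ} (hn : 0 < n) {k : ℕ} (hk : k < n) : ((fi n hn k : Fin n) : ℕ) = k := by
  simp [fi, Nat.mod_eq_of_lt hk]

lemma fi_eq_iff {n : ℕ} (hn : 0 < n) {k : ℕ} (hk : k < n) (i : Fin n) :
    i = fi n hn k ↔ (i : ℕ) = k := by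
  rw [Fin.ext_iff, fi_val hn hk]

lemma fi_ne {n : ℕ} (hn : 0 < n) {k l : ℕ} (hk : k < n) (hl : l < n) (hkl : k ≠ l) :
    fi n hn k ≠ fi n hn l := by
  intro h
  rw [fi_eq_iff hn hl] at h
  rw [fi_val hn hk] at h
  exact hkl h

def mcost : ℕ → ℕ
  | 0 => 0
  | 1 => 0
  | (len+2) => mcost ((len+2) - (len+2)/2) + mcost ((len+2)/2) + (len+2)
  termination_by len => len
  decreasing_by all_goals (simp_wf <;> omega)

lemma mcost_eq_of_two_le {len : ℕ} (h : 2 ≤ len) :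
    mcost len = mcost (len - len/2) + mcost (len/2) + len := by
  obtain ⟨k, rfl⟩ : ∃ k, len = k + 2 := ⟨len - 2, by omega⟩
  rw [mcost]

noncomputable def build (n : ℕ) (hn : 0 < n) (lo : ℕ) : ℕ → List (Matrix (Fin n) (Fin n) ℝ)
  | 0 => []
  | 1 => []
  | (len+2) =>
      build n hn lo ((len+2) - (len+2)/2) ++ build n hn (lo + ((len+2) - (len+2)/2)) ((len+2)/2) ++
      (if ((len+2) - (len+2)/2) = (len+2)/2 then []
        else [gossipA n (fi n hn (lo + (len+2)/2)) (fi n hn (lo + ((len+2) - (len+2)/2)))]) ++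
      (List.range ((len+2)/2)).map
        (fun k => gossipM n (fi n hn (lo + k)) (fi n hn (lo + ((len+2) - (len+2)/2) + k)))
  termination_by len => len
  decreasing_by all_goals (simp_wf <;> omega)

lemma build_eq_of_two_le {n : ℕ} (hn : 0 < n) (lo : ℕ) {len : ℕ} (h : 2 ≤ len) :
    build n hn lo len
      = build n hn lo (len - len/2) ++ build n hn (lo + (len - len/2)) (len/2) ++
        (if (len - len/2) = len/2 then []
          else [gossipA n (fi n hn (lo + len/2)) (fi n hn (lo + (len - len/2)))]) ++
        (List.range (len/2)).map
          (fun k => gossipM n (fi n hn (lo + k)) (fi n hn (lo + (len - len/2) + k))) := by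
  obtain ⟨k, rfl⟩ : ∃ k, len = k + 2 := ⟨len - 2, by omega⟩
  rw [build]

lemma build_mem {n : ℕ} (hn : 0 < n) :
    ∀ len lo, ∀ P ∈ build n hn lo len, memAsym n P := by
  intro len
  induction len using Nat.strong_induction_on with
  | _ len ih =>
    intro lo P hP
    match len, hP with
    | 0, hP => simp [build] at hP
    | 1, hP => simp [build] at hP
    | (len+2), hP =>
      rw [build_eq_of_two_le hn lo (by omega)] at hP
      simp only [List.mem_append, List.mem_map, List.mem_range] at hP
      rcases hP with ((h | h) | h) | ⟨k, _, rfl⟩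
      · exact ih _ (by omega) _ _ h
      · exact ih _ (by omega) _ _ h
      · split_ifs at h with hab
        · simp at h
        · simp at h
          exact ⟨_, _, Or.inr h⟩
      · exact ⟨_, _, Or.inl rfl⟩

lemma rev_prod_append {n : ℕ} (X Y : List (Matrix (Fin n) (Fin n) ℝ)) :
    (X ++ Y).reverse.prod = Y.reverse.prod * X.reverse.prod := by
  rw [List.reverse_append, List.prod_append]

lemma list_range_map_sum (c : ℕ) (h : ℕ → ℝ) :
    ((List.range c).map h).sum = ∑ k ∈ Finset.range c, h k := by
  induction c with
  | zero => simp
  | succ c ih =>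
    rw [List.range_succ, List.map_append, List.sum_append, Finset.sum_range_succ, ih]
    simp

lemma build_cost {n : ℕ} (hn : 0 < n) :
    ∀ len lo, lo + len ≤ n →
      ((build n hn lo len).map (fun Q => ∑ i, ∑ j, |(1 - Q) i j|)).sum = (mcost len : ℝ) := by
  intro len
  induction len using Nat.strong_induction_on with
  | _ len ih =>
    intro lo hlen
    match len with
    | 0 => simp [build, mcost]
    | 1 => simp [build, mcost]
    | (len'+2) =>
      set len := len' + 2 with hlendef
      have h2 : 2 ≤ len := by omega
      set b := len / 2 with hbdef
      set a := len - b with hadef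
      have hb1 : 1 ≤ b := by omega
      have hba : b ≤ a := by omega
      have hab1 : a ≤ b + 1 := by omega
      have habs : a + b = len := by omega
      rw [build_eq_of_two_le hn lo h2]
      rw [List.map_append, List.map_append, List.map_append,
        List.sum_append, List.sum_append, List.sum_append]
      have hIH1 := ih a (by omega) lo (by omega)
      have hIH2 := ih b (by omega) (lo + a) (by omega)
      rw [hIH1, hIH2]
      have hMs : (((List.range b).map
          (fun k => gossipM n (fi n hn (lo + k)) (fi n hn (lo + a + k)))).map
            (fun Q => ∑ i, ∑ j, |(1 - Q) i j|)).sum = 2 * b := by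
        rw [List.map_map, list_range_map_sum]
        have : ∀ k ∈ Finset.range b,
            ((fun Q => ∑ i, ∑ j, |(1 - Q) i j|) ∘
              (fun k => gossipM n (fi n hn (lo + k)) (fi n hn (lo + a + k)))) k = 2 := by
          intro k hk
          rw [Finset.mem_range] at hk
          exact cost_gossipM _ _ (fi_ne hn (by omega) (by omega) (by omega))
        rw [Finset.sum_congr rfl this]
        simp
        ring
      rw [hMs]
      have hmc : mcost len = mcost a + mcost b + len := mcost_eq_of_two_le h2
      by_cases hab : a = b
      · rw [if_pos hab]
        rw [hmc]
        push_cast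
        simp
        norm_cast
        omega
      · rw [if_neg hab]
        have ha1b : a = b + 1 := by omega
        simp only [List.map_cons, List.map_nil, List.sum_cons, List.sum_nil]
        rw [cost_gossipA _ _ (fi_ne hn (by omega) (by omega) (by omega))]
        rw [hmc]
        push_cast
        norm_cast
        omega

noncomputable def SM (n lo a b c : ℕ) (w : Fin n → ℝ) (base : Matrix (Fin n) (Fin n) ℝ) :
    Matrix (Fin n) (Fin n) ℝ :=
  Matrix.of fun i j =>
    if (lo ≤ (i:ℕ) ∧ (i:ℕ) < lo + c) ∨ (lo + a ≤ (i:ℕ) ∧ (i:ℕ) < lo + a + c)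
        ∨ (¬ a = b ∧ (i:ℕ) = lo + b)
    then w j else base i j

lemma SM_apply (n lo a b c : ℕ) (w : Fin n → ℝ) (base : Matrix (Fin n) (Fin n) ℝ)
    (i j : Fin n) :
    SM n lo a b c w base i j =
      if (lo ≤ (i:ℕ) ∧ (i:ℕ) < lo + c) ∨ (lo + a ≤ (i:ℕ) ∧ (i:ℕ) < lo + a + c)
          ∨ (¬ a = b ∧ (i:ℕ) = lo + b)
      then w j else base i j := rfl

lemma build_spec {n : ℕ} (hn : 0 < n) :
    ∀ len lo, 1 ≤ len → lo + len ≤ n →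
      ∃ v : Fin n → ℝ,
        (∑ j, v j = 1) ∧
        (∀ j : Fin n, v j ≠ 0 → lo ≤ (j:ℕ) ∧ (j:ℕ) < lo + len) ∧
        (∀ i : Fin n, lo ≤ (i:ℕ) → (i:ℕ) < lo + len →
          ∀ j, (build n hn lo len).reverse.prod i j = v j) ∧
        (∀ i : Fin n, ¬(lo ≤ (i:ℕ) ∧ (i:ℕ) < lo + len) →
          ∀ j, (build n hn lo len).reverse.prod i j = (1 : Matrix (Fin n) (Fin n) ℝ) i j) := by
  intro len
  induction len using Nat.strong_induction_on with
  | _ len ih =>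
    intro lo h1 hlen
    match len, h1, hlen, ih with
    | 1, h1, hlen, ih =>
      have hb : build n hn lo 1 = [] := by rw [build]
      refine ⟨fun j => if (j:ℕ) = lo then 1 else 0, ?_, ?_, ?_, ?_⟩
      · have hcond : ∀ j : Fin n, ((j:ℕ) = lo) ↔ (j = (⟨lo, by omega⟩ : Fin n)) := by
          intro j; rw [Fin.ext_iff]
        simp only [hcond]
        simp
      · intro j hj
        by_cases h : (j:ℕ) = lo
        · omega
        · simp [h] at hj
      · intro i hi1 hi2 j
        have hival : (i:ℕ) = lo := by omega
        rw [hb]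
        simp only [List.reverse_nil, List.prod_nil]
        rw [Matrix.one_apply]
        by_cases h : i = j
        · rw [if_pos h, if_pos (by rw [← h]; omega)]
        · rw [if_neg h, if_neg (by
            intro hj
            exact h (Fin.ext (by omega)))]
      · intro i hi j
        rw [hb]
        simp
    | (len'+2), h1, hlen, ih =>
      set len := len' + 2 with hlendef
      have h2 : 2 ≤ len := by omega
      set b := len / 2 with hbdef
      set a := len - b with hadef
      have hb1 : 1 ≤ b := by omega
      have hba : b ≤ a := by omega
      have hab1 : a ≤ b + 1 := by omega
      have habs : a + b = len := by omega
      have ha1 : 1 ≤ a := by omega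
      have haln : a < len := by omega
      obtain ⟨v₁, hv₁sum, hv₁supp, hv₁row, hv₁out⟩ := ih a (by omega) lo (by omega) (by omega)
      obtain ⟨v₂, hv₂sum, hv₂supp, hv₂row, hv₂out⟩ :=
        ih b (by omega) (lo + a) (by omega) (by omega)
      set Q₁ := (build n hn lo a).reverse.prod with hQ₁def
      set Q₂ := (build n hn (lo + a) b).reverse.prod with hQ₂def
      set R := Q₂ * Q₁ with hRdef
      set w : Fin n → ℝ := fun j => (v₁ j + v₂ j) / 2 with hwdef
      -- the combined product of the two halves
      have hR : ∀ i j : Fin n, R i j =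
          if lo ≤ (i:ℕ) ∧ (i:ℕ) < lo + a then v₁ j
          else if lo + a ≤ (i:ℕ) ∧ (i:ℕ) < lo + len then v₂ j
          else (1 : Matrix (Fin n) (Fin n) ℝ) i j := by
        intro i j
        rw [hRdef, Matrix.mul_apply]
        by_cases hb1' : lo ≤ (i:ℕ) ∧ (i:ℕ) < lo + a
        · rw [if_pos hb1']
          calc ∑ k, Q₂ i k * Q₁ k j
              = ∑ k, (if i = k then Q₁ k j else 0) := by
                refine Finset.sum_congr rfl fun k _ => ?_
                rw [hv₂out i (by omega) k, Matrix.one_apply]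
                split_ifs <;> simp
            _ = Q₁ i j := by rw [Finset.sum_ite_eq Finset.univ i (fun k => Q₁ k j)]; simp
            _ = v₁ j := hv₁row i hb1'.1 hb1'.2 j
        · rw [if_neg hb1']
          by_cases hb2' : lo + a ≤ (i:ℕ) ∧ (i:ℕ) < lo + len
          · rw [if_pos hb2']
            calc ∑ k, Q₂ i k * Q₁ k j
                = ∑ k, (if k = j then v₂ k else 0) := by
                  refine Finset.sum_congr rfl fun k _ => ?_
                  rw [hv₂row i (by omega) (by omega) k]
                  by_cases hk : v₂ k = 0
                  · simp [hk]
                  · have hks := hv₂supp k hk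
                    rw [hv₁out k (by omega) j, Matrix.one_apply]
                    by_cases hkj : k = j <;> simp [hkj]
              _ = v₂ j := by rw [Finset.sum_ite_eq' Finset.univ j (fun k => v₂ k)]; simp
          · rw [if_neg hb2']
            calc ∑ k, Q₂ i k * Q₁ k j
                = ∑ k, (if i = k then Q₁ k j else 0) := by
                  refine Finset.sum_congr rfl fun k _ => ?_
                  rw [hv₂out i (by omega) k, Matrix.one_apply]
                  split_ifs <;> simp
              _ = Q₁ i j := by rw [Finset.sum_ite_eq Finset.univ i (fun k => Q₁ k j)]; simp
              _ = (1 : Matrix (Fin n) (Fin n) ℝ) i j := hv₁out i (by omega) j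
      have hRrow1 : ∀ i : Fin n, lo ≤ (i:ℕ) → (i:ℕ) < lo + a → ∀ j, R i j = v₁ j := by
        intro i h1' h2' j
        rw [hR i j, if_pos ⟨h1', h2'⟩]
      have hRrow2 : ∀ i : Fin n, lo + a ≤ (i:ℕ) → (i:ℕ) < lo + len → ∀ j, R i j = v₂ j := by
        intro i h1' h2' j
        rw [hR i j, if_neg (by omega), if_pos ⟨h1', h2'⟩]
      have hRout : ∀ i : Fin n, ¬(lo ≤ (i:ℕ) ∧ (i:ℕ) < lo + len) →
          ∀ j, R i j = (1 : Matrix (Fin n) (Fin n) ℝ) i j := by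
        intro i hi j
        rw [hR i j, if_neg (by omega), if_neg (by omega)]
      -- the list decomposition
      have hb2 : build n hn lo len =
          build n hn lo a ++ build n hn (lo + a) b ++
          (if a = b then []
            else [gossipA n (fi n hn (lo + b)) (fi n hn (lo + a))]) ++
          (List.range b).map
            (fun k => gossipM n (fi n hn (lo + k)) (fi n hn (lo + a + k))) :=
        build_eq_of_two_le hn lo h2
      have hprod : (build n hn lo len).reverse.prod =
          ((List.range b).map
            (fun k => gossipM n (fi n hn (lo + k)) (fi n hn (lo + a + k)))).reverse.prod *
          ((if a = b then ([] : List (Matrix (Fin n) (Fin n) ℝ))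
            else [gossipA n (fi n hn (lo + b)) (fi n hn (lo + a))]).reverse.prod * R) := by
        rw [hb2, rev_prod_append, rev_prod_append, rev_prod_append]
      -- after the asymmetric fix-up step
      have hS0 : (if a = b then ([] : List (Matrix (Fin n) (Fin n) ℝ))
            else [gossipA n (fi n hn (lo + b)) (fi n hn (lo + a))]).reverse.prod * R
          = SM n lo a b 0 w R := by
        by_cases hab : a = b
        · rw [if_pos hab]
          simp only [List.reverse_nil, List.prod_nil, Matrix.one_mul]
          funext i j
          rw [SM_apply, if_neg (by omega)]
        · rw [if_neg hab]
          simp only [List.reverse_singleton, List.prod_cons, List.prod_nil, Matrix.mul_one]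
          funext i j
          have hlob : lo + b < n := by omega
          have hloa : lo + a < n := by omega
          rw [gossipA_mul _ _ (fi_ne hn hlob hloa (by omega)) R i j]
          have hpv : ((fi n hn (lo + b) : Fin n) : ℕ) = lo + b := fi_val hn hlob
          have hqv : ((fi n hn (lo + a) : Fin n) : ℕ) = lo + a := fi_val hn hloa
          rw [SM_apply]
          by_cases hi : i = fi n hn (lo + b)
          · rw [if_pos hi, if_pos (by
              right; right
              exact ⟨hab, by rw [hi, hpv]⟩)]
            rw [hRrow1 _ (by omega) (by omega) j, hRrow2 _ (by omega) (by omega) j]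
          · rw [if_neg hi, if_neg (by
              rw [fi_eq_iff hn hlob] at hi
              omega)]
      -- the symmetric merge steps
      have hstep : ∀ c, c < b →
          gossipM n (fi n hn (lo + c)) (fi n hn (lo + a + c)) * SM n lo a b c w R
            = SM n lo a b (c+1) w R := by
        intro c hcb
        have hlc : lo + c < n := by omega
        have hlac : lo + a + c < n := by omega
        funext i j
        rw [gossipM_mul _ _ (fi_ne hn hlc hlac (by omega))]
        have hpv : ((fi n hn (lo + c) : Fin n) : ℕ) = lo + c := fi_val hn hlc
        have hqv : ((fi n hn (lo + a + c) : Fin n) : ℕ) = lo + a + c := fi_val hn hlac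
        have hSp : SM n lo a b c w R (fi n hn (lo + c)) j = v₁ j := by
          rw [SM_apply, if_neg (by rw [hpv]; omega)]
          exact hRrow1 _ (by omega) (by omega) j
        have hSq : SM n lo a b c w R (fi n hn (lo + a + c)) j = v₂ j := by
          rw [SM_apply, if_neg (by rw [hqv]; omega)]
          exact hRrow2 _ (by omega) (by omega) j
        by_cases hi : i = fi n hn (lo + c) ∨ i = fi n hn (lo + a + c)
        · rw [if_pos hi, hSp, hSq, SM_apply, if_pos (by
            rw [fi_eq_iff hn hlc, fi_eq_iff hn hlac] at hi
            rcases hi with hi | hi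
            · left; omega
            · right; left; omega)]
        · rw [if_neg hi, SM_apply, SM_apply]
          rw [fi_eq_iff hn hlc, fi_eq_iff hn hlac] at hi
          push_neg at hi
          have hiff : ((lo ≤ (i:ℕ) ∧ (i:ℕ) < lo + c) ∨ (lo + a ≤ (i:ℕ) ∧ (i:ℕ) < lo + a + c)
                ∨ (¬ a = b ∧ (i:ℕ) = lo + b))
              ↔ ((lo ≤ (i:ℕ) ∧ (i:ℕ) < lo + (c+1)) ∨ (lo + a ≤ (i:ℕ) ∧ (i:ℕ) < lo + a + (c+1))
                ∨ (¬ a = b ∧ (i:ℕ) = lo + b)) := by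
            omega
          rw [if_congr hiff rfl rfl]
      have hMs : ∀ c, c ≤ b →
          ((List.range c).map
            (fun k => gossipM n (fi n hn (lo + k)) (fi n hn (lo + a + k)))).reverse.prod *
            SM n lo a b 0 w R = SM n lo a b c w R := by
        intro c
        induction c with
        | zero => intro _; simp
        | succ c ihc =>
          intro hcb
          rw [List.range_succ, List.map_append, rev_prod_append, Matrix.mul_assoc,
            ihc (by omega)]
          simp only [List.map_cons, List.map_nil, List.reverse_singleton, List.prod_cons,
            List.prod_nil, Matrix.mul_one]
          exact hstep c (by omega)
      refine ⟨w, ?_, ?_, ?_, ?_⟩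
      · show ∑ j, (v₁ j + v₂ j) / 2 = 1
        rw [← Finset.sum_div, Finset.sum_add_distrib, hv₁sum, hv₂sum]
        norm_num
      · intro j hj
        have hor : v₁ j ≠ 0 ∨ v₂ j ≠ 0 := by
          by_contra hcon
          push_neg at hcon
          apply hj
          show (v₁ j + v₂ j) / 2 = 0
          rw [hcon.1, hcon.2]
          norm_num
        rcases hor with h | h
        · have := hv₁supp j h; omega
        · have := hv₂supp j h; omega
      · intro i hi1 hi2 j
        rw [hprod, hS0, hMs b le_rfl, SM_apply, if_pos (by omega)]
      · intro i hi j
        rw [hprod, hS0, hMs b le_rfl, SM_apply, if_neg (by omega)]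
        exact hRout i (by omega) j

lemma mcost_pow : ∀ (m : ℕ), ∀ r ≤ 2^m, mcost (2^m + r) = m * (2^m + r) + 2*r := by
  intro m
  induction m with
  | zero =>
    intro r hr
    interval_cases r
    · show mcost 1 = _
      rw [mcost]
      simp
    · show mcost 2 = _
      have h1 : mcost 1 = 0 := by rw [mcost]
      rw [mcost_eq_of_two_le le_rfl]
      norm_num [h1]
  | succ m ih =>
    intro r hr
    have hp : (2:ℕ)^(m+1) = 2 * 2^m := by rw [pow_succ]; ring
    set P := (2:ℕ)^m with hP
    have hP1 : 1 ≤ P := Nat.one_le_two_pow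
    rw [hp] at hr ⊢
    have hn2 : 2 ≤ 2*P + r := by omega
    have hb : (2*P + r) / 2 = P + r/2 := by omega
    have ha : (2*P + r) - (2*P + r)/2 = P + (r - r/2) := by omega
    have key : ∀ x y : ℕ, x + y = r → x ≤ P → y ≤ P →
        mcost (P+x) + mcost (P+y) + (2*P + r) = (m+1)*(2*P+r) + 2*r := by
      intro x y hxy hx hy
      rw [ih x hx, ih y hy, ← hxy]
      ring
    rw [mcost_eq_of_two_le hn2, ha, hb]
    exact key _ _ (by omega) (by omega) (by omega)

theorem stmt_9 (m r n : ℕ) (hr : r < 2 ^ m) (hn : n = 2 ^ m + r) :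
    IsLeast
      { c : ℝ | ∃ t : ℕ, 1 ≤ t ∧ ∃ P : Fin t → Matrix (Fin n) (Fin n) ℝ,
          (∀ k, memAsym n (P k)) ∧
          ((List.ofFn P).reverse.prod).rank = 1 ∧
          c = ∑ k, ∑ i, ∑ j, |(1 - P k) i j| }
      ((m * n + 2 * r : ℕ) : ℝ) := by
  have hn0 : 0 < n := by rw [hn]; positivity
  constructor
  · -- membership: the explicit construction
    obtain ⟨L, hLdef⟩ : ∃ L : List (Matrix (Fin n) (Fin n) ℝ),
        L = build n hn0 0 n ++ [gossipM n ⟨0, hn0⟩ ⟨0, hn0⟩] := ⟨_, rfl⟩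
    have hmemL : ∀ Q ∈ L, memAsym n Q := by
      rw [hLdef]
      intro Q hQ
      rcases List.mem_append.mp hQ with h | h
      · exact build_mem hn0 n 0 _ h
      · simp at h
        exact ⟨_, _, Or.inl h⟩
    refine ⟨L.length, ?_, L.get, ?_, ?_, ?_⟩
    · rw [hLdef, List.length_append]
      simp
    · intro k
      exact hmemL _ (List.get_mem L k)
    · rw [List.ofFn_get]
      obtain ⟨v, hvsum, hvsupp, hvrow, hvout⟩ := build_spec hn0 n 0 (by omega) (by omega)
      have hprod : L.reverse.prod = (build n hn0 0 n).reverse.prod := by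
        rw [hLdef, rev_prod_append]
        simp [gossipM_self' (⟨0, hn0⟩ : Fin n)]
      rw [hprod]
      refine rank_one_of_rows_eq hn0 v (fun i => funext fun j => ?_) hvsum
      exact hvrow i (by omega) (by omega) j
    · have hsum : ∑ k : Fin L.length, (∑ i, ∑ j, |(1 - L.get k) i j|)
          = (L.map (fun Q => ∑ i, ∑ j, |(1 - Q) i j|)).sum := by
        rw [← List.sum_ofFn]
        congr 1
        conv_rhs => rw [← List.ofFn_get L]
        rw [List.map_ofFn]
        try rfl
      have hval : (L.map (fun Q => ∑ i, ∑ j, |(1 - Q) i j|)).sum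
          = ((m * n + 2 * r : ℕ) : ℝ) := by
        rw [hLdef, List.map_append, List.sum_append, build_cost hn0 n 0 (by omega)]
        have hzero : ((([gossipM n (⟨0, hn0⟩ : Fin n) ⟨0, hn0⟩]).map
            (fun Q => ∑ i, ∑ j, |(1 - Q) i j|)).sum : ℝ) = 0 := by
          simp [gossipM_self' (⟨0, hn0⟩ : Fin n)]
        rw [hzero, add_zero]
        have hmn := mcost_pow m r (le_of_lt hr)
        rw [hn, hmn]
        try push_cast
        try ring
      rw [← hsum] at hval
      exact hval.symm
  · -- lower bound
    rintro c ⟨t, ht, P, hmem, hrank, rfl⟩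
    exact lower_bound m r n hr hn t ht P hmem hrank
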